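/- arXiv:0806.4975 — 2 statements merged into one kernel-verified Lean document; each statement's English description precedes it below -/
import Mathlib

section
/- Let λ > 1 be real and let x : ℕ → ℝ be a sequence with 0 < x(n) ≤ 1 for all n, with x(0) > 1/λ, and satisfying 1 − x(n+1) ≤ (1 − x(n))/(λ·x(n)) for all n ∈ ℕ. Then: (a) x is nondecreasing and x(n) → 1 as n → ∞; (b) the partial products ∏_{n=0}^{N−1} x(n) converge as N → ∞ to a strictly positive limit. Moreover, for every ε with 0 < ε < 1 − 1/λ there exists δ > 0, depending only on λ and ε, such that every such sequence with x(0) ≥ 1/λ + ε satisfies ∏_{n=0}^{∞} x(n) ≥ δ. -/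
open Filter

lemma legality_aux (lam c : ℝ) (hlam : 1 < lam) (hc : 1 / lam < c)
    (x : ℕ → ℝ) (hpos : ∀ n, 0 < x n) (hle : ∀ n, x n ≤ 1)
    (hrec : ∀ n : ℕ, 1 - x (n + 1) ≤ (1 - x n) / (lam * x n)) (hc0 : c ≤ x 0) :
    (∀ n, c ≤ x n) ∧ (∀ n, x n ≤ x (n + 1)) ∧
    (∀ n, 1 - x n ≤ (1 / (lam * c)) ^ n * (1 - x 0)) ∧
    (∀ N, Real.exp (-(1 / (c * (1 - 1 / (lam * c))))) ≤ ∏ n ∈ Finset.range N, x n) := by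
  have hlam0 : 0 < lam := by linarith
  have hcpos : 0 < c := lt_trans (by positivity) hc
  have hlc : 1 < lam * c := by
    have h := (div_lt_iff₀ hlam0).mp hc
    nlinarith
  set r := 1 / (lam * c) with hrdef
  have hr0 : 0 < r := by positivity
  have hr1 : r < 1 := by rw [hrdef, div_lt_one (by linarith)]; linarith
  have hstep : ∀ n, c ≤ x n → x n ≤ x (n + 1) := by
    intro n hcx
    have h2 : 1 ≤ lam * x n := by nlinarith
    have h1 : (1 - x n) / (lam * x n) ≤ 1 - x n :=
      div_le_self (by linarith [hle n]) h2
    linarith [hrec n]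
  have hlb : ∀ n, c ≤ x n := by
    intro n
    induction n with
    | zero => exact hc0
    | succ n ih => exact le_trans ih (hstep n ih)
  have hmono : ∀ n, x n ≤ x (n + 1) := fun n => hstep n (hlb n)
  have hgeo : ∀ n, 1 - x n ≤ r ^ n * (1 - x 0) := by
    intro n
    induction n with
    | zero => simp
    | succ n ih =>
      have hlxn : lam * c ≤ lam * x n := by nlinarith [hlb n]
      calc 1 - x (n + 1) ≤ (1 - x n) / (lam * x n) := hrec n
        _ ≤ (1 - x n) / (lam * c) := by gcongr; linarith [hle n]
        _ ≤ (r ^ n * (1 - x 0)) / (lam * c) := by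
            exact div_le_div_of_nonneg_right ih (by linarith)
        _ = r ^ (n + 1) * (1 - x 0) := by
            rw [pow_succ, hrdef]; field_simp
  have hsum : ∀ N, ∑ n ∈ Finset.range N, (1 - x n) ≤ 1 / (1 - r) := by
    intro N
    have hgs : ∑ n ∈ Finset.range N, r ^ n ≤ 1 / (1 - r) := by
      have h := geom_sum_eq hr1.ne N
      have h2 : (r ^ N - 1) / (r - 1) = (1 - r ^ N) / (1 - r) := by
        rw [← neg_div_neg_eq]; ring_nf
      rw [h, h2]
      apply div_le_div₀ zero_le_one (by nlinarith [pow_nonneg hr0.le N]) (by linarith) le_rfl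
    calc ∑ n ∈ Finset.range N, (1 - x n)
        ≤ ∑ n ∈ Finset.range N, r ^ n * (1 - x 0) :=
          Finset.sum_le_sum fun n _ => hgeo n
      _ = (∑ n ∈ Finset.range N, r ^ n) * (1 - x 0) := by rw [Finset.sum_mul]
      _ ≤ (1 / (1 - r)) * 1 := by
          apply mul_le_mul hgs (by linarith [hpos 0]) (by linarith [hle 0]) (div_nonneg zero_le_one (by linarith))
      _ = 1 / (1 - r) := mul_one _
  have hpoint : ∀ n, Real.exp (-((1 - x n) / c)) ≤ x n := by
    intro n
    have hx := hpos n
    have h1 : (1 - x n) / x n + 1 ≤ Real.exp ((1 - x n) / x n) :=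
      Real.add_one_le_exp _
    have heq : (1 - x n) / x n + 1 = 1 / x n := by field_simp; ring
    have h2 : 1 / x n ≤ Real.exp ((1 - x n) / x n) := by rw [← heq]; exact h1
    have h3 : Real.exp (-((1 - x n) / x n)) ≤ x n := by
      rw [Real.exp_neg]
      calc (Real.exp ((1 - x n) / x n))⁻¹ ≤ (1 / x n)⁻¹ := by
            apply inv_anti₀ (by positivity) h2
        _ = x n := by rw [one_div, inv_inv]
    refine le_trans ?_ h3
    apply Real.exp_le_exp.mpr
    apply neg_le_neg
    gcongr
    · linarith [hle n]
    · exact hlb n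
  refine ⟨hlb, hmono, hgeo, ?_⟩
  intro N
  calc Real.exp (-(1 / (c * (1 - r))))
      ≤ Real.exp (∑ n ∈ Finset.range N, -((1 - x n) / c)) := by
        apply Real.exp_le_exp.mpr
        have e : ∑ n ∈ Finset.range N, -((1 - x n) / c)
            = -((∑ n ∈ Finset.range N, (1 - x n)) / c) := by
          rw [Finset.sum_div, ← Finset.sum_neg_distrib]
        rw [e]
        apply neg_le_neg
        calc (∑ n ∈ Finset.range N, (1 - x n)) / c ≤ (1 / (1 - r)) / c := by
              gcongr
              exact hsum N
          _ = 1 / (c * (1 - r)) := by rw [div_div]; ring_nf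
    _ = ∏ n ∈ Finset.range N, Real.exp (-((1 - x n) / c)) := Real.exp_sum _ _
    _ ≤ ∏ n ∈ Finset.range N, x n :=
        Finset.prod_le_prod (fun n _ => (Real.exp_pos _).le) (fun n _ => hpoint n)

/-- Convergence of legality: if `0 < x(n) ≤ 1`, `x(0) > 1/λ` and
`1 − x(n+1) ≤ (1 − x(n))/(λ·x(n))` with `λ > 1`, then `x` is nondecreasing with
`x(n) → 1`, and the partial products `∏_{n<N} x(n)` converge to a strictly
positive limit.  Moreover, for every `0 < ε < 1 − 1/λ` there is a `δ > 0`,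
depending only on `λ` and `ε`, such that every such sequence with
`x(0) ≥ 1/λ + ε` has infinite product at least `δ`. -/
theorem legality_converges (lam : ℝ) (hlam : 1 < lam) :
    (∀ x : ℕ → ℝ, (∀ n, 0 < x n) → (∀ n, x n ≤ 1) → 1 / lam < x 0 →
      (∀ n : ℕ, 1 - x (n + 1) ≤ (1 - x n) / (lam * x n)) →
      (Monotone x ∧ Tendsto x atTop (nhds 1)) ∧
      (∃ L : ℝ, 0 < L ∧
        Tendsto (fun N : ℕ => ∏ n ∈ Finset.range N, x n) atTop (nhds L))) ∧
    (∀ ε : ℝ, 0 < ε → ε < 1 - 1 / lam →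
      ∃ δ : ℝ, 0 < δ ∧
        ∀ x : ℕ → ℝ, (∀ n, 0 < x n) → (∀ n, x n ≤ 1) →
          (∀ n : ℕ, 1 - x (n + 1) ≤ (1 - x n) / (lam * x n)) →
          1 / lam + ε ≤ x 0 →
          ∀ L : ℝ, Tendsto (fun N : ℕ => ∏ n ∈ Finset.range N, x n) atTop (nhds L) →
            δ ≤ L) := by
  have hlam0 : 0 < lam := by linarith
  constructor
  · intro x hpos hle h0 hrec
    obtain ⟨hlb, hmono, hgeo, hprod⟩ :=
      legality_aux lam (x 0) hlam h0 x hpos hle hrec le_rfl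
    set r := 1 / (lam * x 0) with hrdef
    have hlc : 1 < lam * x 0 := by
      have h := (div_lt_iff₀ hlam0).mp h0
      nlinarith
    have hr0 : 0 ≤ r := by positivity
    have hr1 : r < 1 := by rw [hrdef, div_lt_one (by linarith)]; linarith
    refine ⟨⟨monotone_nat_of_le_succ hmono, ?_⟩, ?_⟩
    · have h1 : Tendsto (fun n : ℕ => 1 - r ^ n * (1 - x 0)) atTop (nhds 1) := by
        have h2 := (tendsto_pow_atTop_nhds_zero_of_lt_one hr0 hr1).mul_const (1 - x 0)
        have h3 := h2.const_sub 1
        simpa using h3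
      exact tendsto_of_tendsto_of_tendsto_of_le_of_le h1 tendsto_const_nhds
        (fun n => by linarith [hgeo n]) (fun n => hle n)
    · set f := fun N : ℕ => ∏ n ∈ Finset.range N, x n with hf
      have hanti : Antitone f := by
        apply antitone_nat_of_succ_le
        intro N
        have he : f (N + 1) = f N * x N := Finset.prod_range_succ _ _
        have hfn : 0 ≤ f N := Finset.prod_nonneg fun i _ => (hpos i).le
        rw [he]
        nlinarith [hle N, hpos N]
      have hbdd : BddBelow (Set.range f) := by
        refine ⟨Real.exp (-(1 / (x 0 * (1 - 1 / (lam * x 0))))), ?_⟩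
        rintro y ⟨N, rfl⟩
        exact hprod N
      refine ⟨⨅ N, f N, ?_, tendsto_atTop_ciInf hanti hbdd⟩
      exact lt_of_lt_of_le (Real.exp_pos _) (le_ciInf hprod)
  · intro ε hε hε2
    refine ⟨Real.exp (-(1 / ((1 / lam + ε) * (1 - 1 / (lam * (1 / lam + ε)))))),
      Real.exp_pos _, ?_⟩
    intro x hpos hle hrec h0 L hL
    have hc : 1 / lam < 1 / lam + ε := by linarith
    obtain ⟨-, -, -, hprod⟩ :=
      legality_aux lam (1 / lam + ε) hlam hc x hpos hle hrec h0
    exact ge_of_tendsto' hL hprod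
end

section
/- Let λ > 1 and B ≥ 0 be real numbers and let ε satisfy 0 < ε < 1 − 1/λ. Then there exists a constant K > 0, depending only on λ, B and ε, with the following property: for every sequence ℓ : ℕ → ℝ with ℓ(n) > 0 for all n and every nonincreasing sequence I : ℕ → ℝ with I(n) ≥ 0 for all n, if ℓ(n+1) ≥ λ·ℓ(n) − 2B·I(n) for all n and (ℓ(0) − 2λ⁻¹·B·I(0))/ℓ(0) ≥ 1/λ + ε, then ℓ(n) ≥ K·λⁿ·ℓ(0) for all n ∈ ℕ. -/
/-- Abstract form of Corollary 6.9: if `λ > 1`, `B ≥ 0` and `0 < ε < 1 − 1/λ`,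
then there is a constant `K > 0`, depending only on `λ`, `B` and `ε`, such that
for all positive sequences `ℓ` and nonnegative nonincreasing sequences `I` with
`ℓ(n+1) ≥ λ·ℓ(n) − 2B·I(n)` and legality `(ℓ(0) − 2λ⁻¹·B·I(0))/ℓ(0) ≥ 1/λ + ε`,
one has `ℓ(n) ≥ K·λⁿ·ℓ(0)` for all `n`. -/
theorem legality_lower_bound (lam B eps : ℝ) (hlam : 1 < lam) (hB : 0 ≤ B)
    (heps1 : 0 < eps) (heps2 : eps < 1 - 1 / lam) :
    ∃ K : ℝ, 0 < K ∧
      ∀ l I : ℕ → ℝ, (∀ n, 0 < l n) → (∀ n, 0 ≤ I n) → Antitone I →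
        (∀ n : ℕ, lam * l n - 2 * B * I n ≤ l (n + 1)) →
        1 / lam + eps ≤ (l 0 - 2 * lam⁻¹ * B * I 0) / l 0 →
        ∀ n : ℕ, K * lam ^ n * l 0 ≤ l n := by
  have hlam0 : (0:ℝ) < lam := lt_trans one_pos hlam
  have hlam1 : (0:ℝ) < lam - 1 := by linarith
  refine ⟨lam * eps / (lam - 1), by positivity, ?_⟩
  intro l I hl hI hIanti hrec hleg n
  set a : ℝ := 2 * B * I 0 with ha_def
  have ha : 0 ≤ a := by
    have := hI 0; positivity
  -- From legality: a ≤ (lam - 1 - lam*eps) * l 0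
  have hleg' : (1 / lam + eps) * l 0 ≤ l 0 - 2 * lam⁻¹ * B * I 0 :=
    (le_div_iff₀ (hl 0)).mp hleg
  have hinv : lam * lam⁻¹ = 1 := mul_inv_cancel₀ (ne_of_gt hlam0)
  have ha2 : a ≤ (lam - 1 - lam * eps) * l 0 := by
    have h := mul_le_mul_of_nonneg_left hleg' (le_of_lt hlam0)
    have h1 : lam * (1/lam) = 1 := mul_one_div_cancel (ne_of_gt hlam0)
    nlinarith [hl 0]
  -- recurrence with constant a
  have hrec' : ∀ m, lam * l m - a ≤ l (m + 1) := by
    intro m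
    have hIm : I m ≤ I 0 := hIanti (Nat.zero_le m)
    have : 2 * B * I m ≤ a := by
      have h2B : 0 ≤ 2 * B := by linarith
      exact mul_le_mul_of_nonneg_left hIm h2B
    linarith [hrec m]
  -- key induction
  have key : ∀ m, (lam - 1) * lam ^ m * l 0 - a * (lam ^ m - 1) ≤ (lam - 1) * l m := by
    intro m
    induction m with
    | zero => simp
    | succ m ih =>
      have h1 := hrec' m
      have hlm : (1:ℝ) ≤ lam ^ m := one_le_pow₀ (le_of_lt hlam)
      have h2 := mul_le_mul_of_nonneg_left h1 (le_of_lt hlam1)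
      rw [pow_succ]
      nlinarith [mul_le_mul_of_nonneg_left ih (le_of_lt hlam0)]
  have hlm : (1:ℝ) ≤ lam ^ n := one_le_pow₀ (le_of_lt hlam)
  have hfinal : lam * eps * lam ^ n * l 0 ≤ (lam - 1) * l n := by
    have hk := key n
    nlinarith [hl 0, mul_le_mul_of_nonneg_left ha2 (le_of_lt (lt_of_lt_of_le one_pos hlm))]
  rw [div_mul_eq_mul_div, div_mul_eq_mul_div, div_le_iff₀ hlam1]
  nlinarith [hl n]
end
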